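/- Let q be a power of 2, let f : F_q → F_q be a function with f(0) = 0 such that for every u ∈ F_q*, the map x ↦ f(x) + u·x is 2-to-1. Fix v ∈ F_q \ {f(x) + x : x ∈ F_q}. For u₁, u₂ ∈ F_q*, the number of solutions x ∈ F_q of u₁·f(x) + u₂·x + u₂·v = 0 is either 0 or 2. -/

import Mathlib

/-- with f an o-polynomial function and v outside {f(x)+x}, for
u₁, u₂ ≠ 0 the equation u₁·f(x) + u₂·x + u₂·v = 0 has 0 or 2 solutions. -/
theorem stmt1 {F : Type*} [Field F] [Fintype F] [DecidableEq F] (m : ℕ)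
    (hq : Fintype.card F = 2 ^ m)
    (f : F → F) (hf0 : f 0 = 0)
    (h2to1 : ∀ u : F, u ≠ 0 → ∀ y : F,
      (Finset.univ.filter (fun x : F => f x + u * x = y)).card = 0 ∨
      (Finset.univ.filter (fun x : F => f x + u * x = y)).card = 2)
    (v : F) (hv : v ∉ {y : F | ∃ x : F, f x + x = y})
    (u₁ u₂ : F) (hu₁ : u₁ ≠ 0) (hu₂ : u₂ ≠ 0) :
    (Finset.univ.filter (fun x : F => u₁ * f x + u₂ * x + u₂ * v = 0)).card = 0 ∨
    (Finset.univ.filter (fun x : F => u₁ * f x + u₂ * x + u₂ * v = 0)).card = 2 := by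
  have key : (Finset.univ.filter (fun x : F => u₁ * f x + u₂ * x + u₂ * v = 0))
      = (Finset.univ.filter (fun x : F => f x + (u₂ / u₁) * x = -(u₂ / u₁) * v)) := by
    ext x
    simp only [Finset.mem_filter, Finset.mem_univ, true_and]
    have h1 : u₁ * (f x + u₂ / u₁ * x) = u₁ * f x + u₂ * x := by
      field_simp
    have h2 : u₁ * (-(u₂ / u₁) * v) = -(u₂ * v) := by
      field_simp
    constructor
    · intro h
      apply mul_left_cancel₀ hu₁
      rw [h1, h2]
      linear_combination h
    · intro h
      have h3 : u₁ * f x + u₂ * x = -(u₂ * v) := by rw [← h1, ← h2, h]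
      linear_combination h3
  rw [key]
  exact h2to1 (u₂ / u₁) (div_ne_zero hu₂ hu₁) _
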